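/- arXiv:2008.05071 — 2 statements merged into one kernel-verified Lean document; each statement's English description precedes it below -/
import Mathlib

section
/- Let α > 1 and let x ∈ ℝ^K be a nonzero vector satisfying |x_i| ≥ α|x_{i+1}| for all 1 ≤ i ≤ K−1 (an α-strongly-decaying vector). Then ‖x‖₁² ≤ φ(K)·‖x‖₂², where φ(K) = ((α^K − 1)(α + 1))/((α^K + 1)(α − 1)). -/
open Finset

private lemma abel_aux (d v : ℕ → ℝ) (K : ℕ)
    (hD : ∀ m, m ≤ K → ∑ j ∈ range m, d j ≤ 0)
    (hv : ∀ j, j + 2 ≤ K → v (j + 1) ≤ v j) :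
    ∀ n, n ≤ K → ∑ j ∈ range n, d j * v j ≤ (∑ j ∈ range n, d j) * v (n - 1) := by
  intro n
  induction n with
  | zero => intro _; simp
  | succ n ih =>
    intro hn
    rw [Finset.sum_range_succ, Finset.sum_range_succ, add_mul, Nat.succ_sub_one]
    have h1 : ∑ j ∈ range n, d j * v j ≤ (∑ j ∈ range n, d j) * v (n - 1) :=
      ih (le_trans (Nat.le_succ n) hn)
    have h2 : (∑ j ∈ range n, d j) * v (n - 1) ≤ (∑ j ∈ range n, d j) * v n := by
      rcases Nat.eq_zero_or_pos n with h | h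
      · subst h; simp
      · have hvn : v n ≤ v (n - 1) := by
          have := hv (n - 1) (by omega)
          rwa [Nat.sub_add_cancel h] at this
        exact mul_le_mul_of_nonpos_left hvn (hD n (by omega))
    linarith

theorem strongly_decaying_l1_sq_le (α : ℝ) (hα : 1 < α) (K : ℕ) (hK : 1 ≤ K)
    (x : ℕ → ℝ) (hne : ∃ i ∈ Finset.Icc 1 K, x i ≠ 0)
    (hdec : ∀ i, 1 ≤ i → i ≤ K - 1 → |x i| ≥ α * |x (i + 1)|) :
    (∑ i ∈ Finset.Icc 1 K, |x i|) ^ 2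
      ≤ ((α ^ K - 1) * (α + 1)) / ((α ^ K + 1) * (α - 1))
          * ∑ i ∈ Finset.Icc 1 K, (x i) ^ 2 := by
  have hα0 : (0:ℝ) < α := by linarith
  set r : ℝ := α⁻¹ with hrdef
  have hr0 : 0 < r := inv_pos.mpr hα0
  have hr1 : r < 1 := inv_lt_one_of_one_lt₀ hα
  have hrα : r * α = 1 := inv_mul_cancel₀ (ne_of_gt hα0)
  set b : ℕ → ℝ := fun j => |x (j + 1)| with hbdef
  have hb0 : ∀ j, 0 ≤ b j := fun j => abs_nonneg _
  have hbd : ∀ j, j + 2 ≤ K → b (j + 1) ≤ r * b j := by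
    intro j hj
    have h := hdec (j + 1) (by omega) (by omega)
    have h2 : α * b (j + 1) ≤ b j := by simpa [hbdef] using h
    have h3 : r * (α * b (j + 1)) ≤ r * b j := mul_le_mul_of_nonneg_left h2 hr0.le
    rwa [← mul_assoc, hrα, one_mul] at h3
  -- reindex
  have hS : ∑ i ∈ Finset.Icc 1 K, |x i| = ∑ j ∈ range K, b j := by
    rw [← Finset.Ico_add_one_right_eq_Icc, Finset.sum_Ico_eq_sum_range]
    simp [hbdef, add_comm]
  have hQ : ∑ i ∈ Finset.Icc 1 K, (x i) ^ 2 = ∑ j ∈ range K, b j ^ 2 := by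
    rw [← Finset.Ico_add_one_right_eq_Icc, Finset.sum_Ico_eq_sum_range]
    simp [hbdef, sq_abs, add_comm]
  rw [hS, hQ]
  -- the weight sequence and transformed sequence
  set d : ℕ → ℝ := fun j => (1 + r ^ K) * r ^ j - (1 + r) * (r ^ 2) ^ j with hddef
  set v : ℕ → ℝ := fun j => b j ^ 2 * (α ^ 2) ^ j with hvdef
  have hrne1 : r ≠ 1 := ne_of_lt hr1
  have hr2ne1 : r ^ 2 ≠ 1 := by nlinarith
  have hform : ∀ m, ∑ j ∈ range m, d j = (1 - r ^ m) * (r ^ K - r ^ m) / (1 - r) := by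
    intro m
    have h1 : ∑ j ∈ range m, r ^ j = (r ^ m - 1) / (r - 1) := geom_sum_eq hrne1 m
    have h2 : ∑ j ∈ range m, (r ^ 2) ^ j = ((r ^ 2) ^ m - 1) / (r ^ 2 - 1) :=
      geom_sum_eq hr2ne1 m
    have : ∑ j ∈ range m, d j
        = (1 + r ^ K) * ((r ^ m - 1) / (r - 1)) - (1 + r) * (((r ^ 2) ^ m - 1) / (r ^ 2 - 1)) := by
      rw [hddef]
      rw [Finset.sum_sub_distrib, ← Finset.mul_sum, ← Finset.mul_sum, h1, h2]
    rw [this]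
    have hne1 : r - 1 ≠ 0 := by intro h; apply hrne1; linarith
    have hne2 : r ^ 2 - 1 ≠ 0 := by intro h; apply hr2ne1; linarith
    have hne3 : (1:ℝ) - r ≠ 0 := by intro h; apply hrne1; linarith
    field_simp
    ring
  have hD : ∀ m, m ≤ K → ∑ j ∈ range m, d j ≤ 0 := by
    intro m hm
    rw [hform m]
    apply div_nonpos_of_nonpos_of_nonneg
    · have h1 : r ^ m ≤ 1 := pow_le_one₀ hr0.le hr1.le
      have h2 : r ^ K ≤ r ^ m := pow_le_pow_of_le_one hr0.le hr1.le hm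
      nlinarith
    · linarith
  have hDK : ∑ j ∈ range K, d j = 0 := by rw [hform K]; simp
  have hv : ∀ j, j + 2 ≤ K → v (j + 1) ≤ v j := by
    intro j hj
    have h := hbd j hj
    rw [hvdef]
    simp only
    have : b (j + 1) ^ 2 ≤ r ^ 2 * b j ^ 2 := by nlinarith [hb0 (j+1), hb0 j]
    have hα2 : (0:ℝ) < (α ^ 2) ^ j := by positivity
    calc b (j + 1) ^ 2 * (α ^ 2) ^ (j + 1)
        ≤ (r ^ 2 * b j ^ 2) * (α ^ 2) ^ (j + 1) := by nlinarith [pow_pos (by positivity : (0:ℝ) < α^2) (j+1)]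
      _ = b j ^ 2 * (α ^ 2) ^ j * (r ^ 2 * α ^ 2) := by ring
      _ = b j ^ 2 * (α ^ 2) ^ j := by
          have : r ^ 2 * α ^ 2 = 1 := by rw [← mul_pow, hrα]; norm_num
          rw [this, mul_one]
  have habel : ∑ j ∈ range K, d j * v j ≤ 0 := by
    have := abel_aux d v K hD hv K le_rfl
    rw [hDK] at this
    simpa using this
  -- Step B : (1 + r^K) * ∑ α^j b_j^2 ≤ (1 + r) * ∑ b_j^2
  have hterm : ∀ j, d j * v j = (1 + r ^ K) * (α ^ j * b j ^ 2) - (1 + r) * b j ^ 2 := by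
    intro j
    have e1 : r ^ j * (α ^ 2) ^ j = α ^ j := by
      rw [← mul_pow]
      congr 1
      rw [hrdef]
      field_simp
    have e2 : (r ^ 2) ^ j * (α ^ 2) ^ j = 1 := by
      rw [← mul_pow, ← mul_pow, hrα]; norm_num
    rw [hddef, hvdef]
    simp only
    linear_combination (1 + r ^ K) * b j ^ 2 * e1 - (1 + r) * b j ^ 2 * e2
  have hB : (1 + r ^ K) * (∑ j ∈ range K, α ^ j * b j ^ 2)
      ≤ (1 + r) * ∑ j ∈ range K, b j ^ 2 := by
    have hsum : ∑ j ∈ range K, d j * v j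
        = ∑ j ∈ range K, ((1 + r ^ K) * (α ^ j * b j ^ 2) - (1 + r) * b j ^ 2) :=
      Finset.sum_congr rfl fun j _ => hterm j
    rw [Finset.sum_sub_distrib, ← Finset.mul_sum, ← Finset.mul_sum] at hsum
    linarith [habel, hsum]
  -- Step A : Cauchy-Schwarz
  have hA : (∑ j ∈ range K, b j) ^ 2
      ≤ (∑ j ∈ range K, r ^ j) * ∑ j ∈ range K, α ^ j * b j ^ 2 := by
    have := Finset.sum_mul_sq_le_sq_mul_sq (range K)
      (fun j => Real.sqrt r ^ j) (fun j => Real.sqrt α ^ j * b j)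
    have hfg : ∀ j, Real.sqrt r ^ j * (Real.sqrt α ^ j * b j) = b j := by
      intro j
      rw [← mul_assoc, ← mul_pow, ← Real.sqrt_mul hr0.le, hrα, Real.sqrt_one, one_pow, one_mul]
    have hf2 : ∀ j, (Real.sqrt r ^ j) ^ 2 = r ^ j := by
      intro j
      rw [← pow_mul, mul_comm, pow_mul, Real.sq_sqrt hr0.le]
    have hg2 : ∀ j, (Real.sqrt α ^ j * b j) ^ 2 = α ^ j * b j ^ 2 := by
      intro j
      rw [mul_pow, ← pow_mul, mul_comm j 2, pow_mul, Real.sq_sqrt hα0.le]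
    calc (∑ j ∈ range K, b j) ^ 2
        = (∑ j ∈ range K, Real.sqrt r ^ j * (Real.sqrt α ^ j * b j)) ^ 2 := by
          congr 1; exact (Finset.sum_congr rfl fun j _ => (hfg j).symm)
      _ ≤ (∑ j ∈ range K, (Real.sqrt r ^ j) ^ 2) * ∑ j ∈ range K, (Real.sqrt α ^ j * b j) ^ 2 :=
          this
      _ = (∑ j ∈ range K, r ^ j) * ∑ j ∈ range K, α ^ j * b j ^ 2 := by
          rw [Finset.sum_congr rfl fun j _ => hf2 j, Finset.sum_congr rfl fun j _ => hg2 j]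
  -- combine
  have hG : ∑ j ∈ range K, r ^ j = (r ^ K - 1) / (r - 1) := geom_sum_eq hrne1 K
  have hrKpos : (0:ℝ) < 1 + r ^ K := by positivity
  have hT0 : 0 ≤ ∑ j ∈ range K, α ^ j * b j ^ 2 :=
    Finset.sum_nonneg fun j _ => by positivity
  have hG0 : 0 ≤ ∑ j ∈ range K, r ^ j := Finset.sum_nonneg fun j _ => by positivity
  have hQ0 : 0 ≤ ∑ j ∈ range K, b j ^ 2 := Finset.sum_nonneg fun j _ => sq_nonneg _
  have hT : ∑ j ∈ range K, α ^ j * b j ^ 2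
      ≤ (1 + r) / (1 + r ^ K) * ∑ j ∈ range K, b j ^ 2 := by
    rw [div_mul_eq_mul_div, le_div_iff₀ hrKpos]
    linarith [hB]
  have hchain : (∑ j ∈ range K, b j) ^ 2
      ≤ ((r ^ K - 1) / (r - 1) * ((1 + r) / (1 + r ^ K))) * ∑ j ∈ range K, b j ^ 2 := by
    calc (∑ j ∈ range K, b j) ^ 2
        ≤ (∑ j ∈ range K, r ^ j) * ∑ j ∈ range K, α ^ j * b j ^ 2 := hA
      _ ≤ (∑ j ∈ range K, r ^ j) * ((1 + r) / (1 + r ^ K) * ∑ j ∈ range K, b j ^ 2) :=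
          mul_le_mul_of_nonneg_left hT hG0
      _ = ((r ^ K - 1) / (r - 1) * ((1 + r) / (1 + r ^ K))) * ∑ j ∈ range K, b j ^ 2 := by
          rw [hG]; ring
  have hφ : (r ^ K - 1) / (r - 1) * ((1 + r) / (1 + r ^ K))
      = ((α ^ K - 1) * (α + 1)) / ((α ^ K + 1) * (α - 1)) := by
    rw [hrdef, inv_pow]
    have h1 : α - 1 ≠ 0 := by intro h; linarith
    have h2 : α ^ K ≠ 0 := by positivity
    have h3 : (α ^ K)⁻¹ - 1 ≠ 0 := by
      have : (α ^ K)⁻¹ < 1 := inv_lt_one_of_one_lt₀ (one_lt_pow₀ hα (by omega))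
      intro h; linarith
    have h4 : α⁻¹ - 1 ≠ 0 := by
      intro h
      exact hrne1 (by rw [hrdef]; linarith)
    have h5 : (1:ℝ) + (α ^ K)⁻¹ ≠ 0 := by
      have : (0:ℝ) < (α ^ K)⁻¹ := by positivity
      intro h; linarith
    have h6 : (α ^ K + 1) * (α - 1) ≠ 0 := by
      apply mul_ne_zero _ h1
      have : (0:ℝ) < α ^ K := by positivity
      intro h; linarith
    have h7 : α ≠ 0 := ne_of_gt hα0
    rw [div_mul_div_comm, div_eq_div_iff (mul_ne_zero h4 h5) h6]
    field_simp
    ring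
  rw [← hφ]
  exact hchain
end

section
/- For every positive integer n, n! satisfies √(2π)·n^{n+1/2}·e^{−n}·e^{1/(12n+1)} < n! < √(2π)·n^{n+1/2}·e^{−n}·e^{1/(12n)}. -/
open Real Filter Stirling Topology

-- strict upper bound on the log-difference
lemma rs_diff_lt (m : ℕ) :
    Real.log (stirlingSeq (m+1)) - Real.log (stirlingSeq (m+2)) <
      1 / (12 * ((m:ℝ)+1)) - 1 / (12 * ((m:ℝ)+2)) := by
  have hx : (0:ℝ) ≤ (m:ℝ) := Nat.cast_nonneg m
  set t2 : ℝ := ((1:ℝ) / (2 * (↑(m+1):ℝ) + 1))^2 with ht2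
  have hpos : 0 < t2 := by positivity
  have hlt1 : t2 < 1 := by
    rw [ht2]
    push_cast
    rw [div_pow, one_pow, div_lt_one (by positivity)]
    nlinarith
  have hgeo : HasSum (fun k : ℕ => (1/3 : ℝ) * t2 ^ (k+1)) (1/3 * t2 * (1-t2)⁻¹) := by
    have h := (hasSum_geometric_of_lt_one hpos.le hlt1).mul_left (1/3 * t2)
    have he : (fun k : ℕ => (1/3:ℝ) * t2 ^ (k+1)) = fun k => (1/3 * t2) * t2 ^ k := by
      funext k; rw [pow_succ]; ring
    rw [he, mul_assoc]
    simpa [mul_assoc] using h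
  have hsum := Stirling.log_stirlingSeq_diff_hasSum m
  have hlt : Real.log (stirlingSeq (m+1)) - Real.log (stirlingSeq (m+2)) <
      1/3 * t2 * (1-t2)⁻¹ := by
    refine hasSum_lt (i := 1) (fun k => ?_) ?_ hsum hgeo
    · have h1 : (1:ℝ) / (2 * ↑(k+1) + 1) ≤ 1/3 := by
        apply div_le_div_of_nonneg_left one_pos.le (by norm_num)
        push_cast; linarith [Nat.cast_nonneg (α := ℝ) k]
      exact mul_le_mul_of_nonneg_right h1 (by positivity)
    · have ht : (0:ℝ) < t2 ^ (1+1) := pow_pos hpos _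
      have : ((1 / (2 * (↑(m+1):ℝ) + 1)) ^ 2) ^ (1+1) = t2 ^ (1+1) := by rw [ht2]
      rw [this]
      push_cast
      nlinarith
  refine hlt.trans_le (le_of_eq ?_)
  have h6 : (1:ℝ) - ((1:ℝ)/(2*((m:ℝ)+1)+1))^2 ≠ 0 := by
    have : ((1:ℝ)/(2*((m:ℝ)+1)+1))^2 < 1 := by
      rw [div_pow, one_pow, div_lt_one (by positivity)]; nlinarith
    exact ne_of_gt (by linarith)
  rw [ht2]
  push_cast
  have hc : (0:ℝ) < 2*((m:ℝ)+1)+1 := by positivity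
  have e1 : (1:ℝ) - (1/(2*((m:ℝ)+1)+1))^2 = ((2*((m:ℝ)+1)+1)^2 - 1)/((2*((m:ℝ)+1)+1)^2) := by
    field_simp
  rw [e1, inv_div]
  have h2 : ((2*((m:ℝ)+1)+1)^2 - (1:ℝ)) ≠ 0 := by nlinarith
  have ha : ((m:ℝ)+1) ≠ 0 := by positivity
  have hb : ((m:ℝ)+2) ≠ 0 := by positivity
  field_simp [hc.ne', h2, ha, hb]
  ring

lemma rs_lt_diff (m : ℕ) :
    1 / (12 * ((m:ℝ)+1) + 1) - 1 / (12 * ((m:ℝ)+2) + 1) <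
      Real.log (stirlingSeq (m+1)) - Real.log (stirlingSeq (m+2)) := by
  have hx : (0:ℝ) ≤ (m:ℝ) := Nat.cast_nonneg m
  set t2 : ℝ := ((1:ℝ) / (2 * (↑(m+1):ℝ) + 1))^2 with ht2
  have hpos : 0 < t2 := by positivity
  have hsum := Stirling.log_stirlingSeq_diff_hasSum m
  have hone : HasSum (fun k : ℕ => if k = 0 then (1/3 : ℝ) * t2 else 0) (1/3 * t2) :=
    hasSum_ite_eq 0 _
  have hlt : (1/3 : ℝ) * t2 < Real.log (stirlingSeq (m+1)) - Real.log (stirlingSeq (m+2)) := by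
    refine hasSum_lt (i := 1) (fun k => ?_) ?_ hone hsum
    · rcases eq_or_ne k 0 with rfl | hk
      · simp only [if_pos rfl]
        rw [ht2]
        norm_num
      · rw [if_neg hk]
        positivity
    · simp only [if_neg one_ne_zero]
      positivity
  refine lt_of_le_of_lt (le_of_lt ?_) hlt
  rw [ht2]
  push_cast
  rw [div_pow, one_pow]
  rw [show (1:ℝ)/3 * (1/(2*((m:ℝ)+1)+1)^2) = 1/(3*(2*((m:ℝ)+1)+1)^2) from by rw [div_mul_div_comm]; norm_num]
  rw [div_sub_div _ _ (by positivity) (by positivity),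
    div_lt_div_iff₀ (by positivity) (by positivity)]
  nlinarith

lemma rs_log_tendsto :
    Tendsto (fun m : ℕ => Real.log (stirlingSeq (m+1))) atTop (𝓝 (Real.log (√π))) := by
  have h := Stirling.tendsto_stirlingSeq_sqrt_pi.comp (tendsto_add_atTop_nat 1)
  exact h.log (by positivity)

lemma rs_inv_tendsto (c : ℝ) :
    Tendsto (fun m : ℕ => 1 / (12 * ((m:ℝ)+1) + c)) atTop (𝓝 0) := by
  have h1 : Tendsto (fun m : ℕ => 12 * ((m:ℝ)+1) + c) atTop atTop := by
    apply tendsto_atTop_add_const_right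
    apply Tendsto.const_mul_atTop (by norm_num : (0:ℝ) < 12)
    exact tendsto_atTop_add_const_right _ _ tendsto_natCast_atTop_atTop
  simp only [one_div]
  exact h1.inv_tendsto_atTop



noncomputable def rsu (m : ℕ) : ℝ := Real.log (stirlingSeq (m+1)) - 1 / (12 * ((m:ℝ)+1) + 0)
noncomputable def rsv (m : ℕ) : ℝ := Real.log (stirlingSeq (m+1)) - 1 / (12 * ((m:ℝ)+1) + 1)

lemma rsu_tendsto : Tendsto rsu atTop (𝓝 (Real.log (√π))) := by
  unfold rsu
  simpa only [sub_zero] using rs_log_tendsto.sub (rs_inv_tendsto 0)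

lemma rsv_tendsto : Tendsto rsv atTop (𝓝 (Real.log (√π))) := by
  unfold rsv
  simpa only [sub_zero] using rs_log_tendsto.sub (rs_inv_tendsto 1)

lemma rsu_mono : StrictMono rsu := by
  apply strictMono_nat_of_lt_succ
  intro m
  have h := rs_diff_lt m
  unfold rsu
  push_cast
  ring_nf
  ring_nf at h
  linarith

lemma rsv_anti : StrictAnti rsv := by
  apply strictAnti_nat_of_succ_lt
  intro m
  have h := rs_lt_diff m
  unfold rsv
  push_cast
  ring_nf
  ring_nf at h
  linarith

lemma rs_key (n : ℕ) (hn : 0 < n) :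
    Real.log (√π) + 1 / (12 * (n:ℝ) + 1) < Real.log (stirlingSeq n) ∧
    Real.log (stirlingSeq n) < Real.log (√π) + 1 / (12 * (n:ℝ)) := by
  obtain ⟨m, rfl⟩ : ∃ m, n = m + 1 := ⟨n - 1, (Nat.succ_pred_eq_of_pos hn).symm⟩
  constructor
  · have h1 : rsv (m+1) ≥ Real.log (√π) := rsv_anti.antitone.le_of_tendsto rsv_tendsto (m+1)
    have h2 : rsv m > rsv (m+1) := rsv_anti (Nat.lt_succ_self m)
    have : rsv m > Real.log (√π) := lt_of_le_of_lt h1 h2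
    unfold rsv at this
    push_cast
    ring_nf
    ring_nf at this
    linarith
  · have h1 : rsu (m+1) ≤ Real.log (√π) := rsu_mono.monotone.ge_of_tendsto rsu_tendsto (m+1)
    have h2 : rsu m < rsu (m+1) := rsu_mono (Nat.lt_succ_self m)
    have : rsu m < Real.log (√π) := lt_of_lt_of_le h2 h1
    unfold rsu at this
    push_cast
    ring_nf
    ring_nf at this
    linarith



theorem robbins_stirling (n : ℕ) (hn : 0 < n) :
    Real.sqrt (2 * Real.pi) * (n : ℝ) ^ ((n : ℝ) + 1 / 2) * Real.exp (-(n : ℝ))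
        * Real.exp (1 / (12 * (n : ℝ) + 1)) < (n.factorial : ℝ) ∧
    (n.factorial : ℝ) < Real.sqrt (2 * Real.pi) * (n : ℝ) ^ ((n : ℝ) + 1 / 2)
        * Real.exp (-(n : ℝ)) * Real.exp (1 / (12 * (n : ℝ))) := by
  have hn0 : (0:ℝ) < (n:ℝ) := Nat.cast_pos.mpr hn
  obtain ⟨hk1, hk2⟩ := rs_key n hn
  -- stirlingSeq n is positive
  have hspos : 0 < stirlingSeq n := by
    obtain ⟨m, rfl⟩ : ∃ m, n = m + 1 := ⟨n - 1, (Nat.succ_pred_eq_of_pos hn).symm⟩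
    exact Stirling.stirlingSeq'_pos m
  -- exponentiate the key inequalities
  have hK1 : √π * Real.exp (1 / (12 * (n:ℝ) + 1)) < stirlingSeq n := by
    have := Real.exp_lt_exp.mpr hk1
    rwa [Real.exp_add, Real.exp_log (by positivity), Real.exp_log hspos] at this
  have hK2 : stirlingSeq n < √π * Real.exp (1 / (12 * (n:ℝ))) := by
    have := Real.exp_lt_exp.mpr hk2
    rwa [Real.exp_add, Real.exp_log hspos, Real.exp_log (by positivity : (0:ℝ) < √π)] at this
  -- rewrite the factorial
  have hden : √(2*(n:ℝ)) * ((n:ℝ)/Real.exp 1)^n = √2 * √(n:ℝ) * ((n:ℝ)^n * Real.exp (-(n:ℝ))) := by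
    rw [Real.sqrt_mul (by norm_num), div_pow, ← Real.exp_nat_mul, mul_one, Real.exp_neg]
    ring
  have hfact : (n.factorial : ℝ) = stirlingSeq n * (√2 * √(n:ℝ) * ((n:ℝ)^n * Real.exp (-(n:ℝ)))) := by
    rw [← hden, stirlingSeq, div_mul_cancel₀]
    positivity
  have hpow : (n:ℝ) ^ ((n:ℝ) + 1/2) = (n:ℝ)^(n:ℕ) * √(n:ℝ) := by
    rw [Real.rpow_add hn0, Real.rpow_natCast, Real.sqrt_eq_rpow]
  have hsqrt : √(2*π) = √2 * √π := Real.sqrt_mul (by norm_num) _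
  have hC : (0:ℝ) < √2 * √(n:ℝ) * ((n:ℝ)^n * Real.exp (-(n:ℝ))) := by positivity
  constructor
  · rw [hfact, hpow, hsqrt]
    calc √2 * √π * ((n:ℝ)^(n:ℕ) * √(n:ℝ)) * Real.exp (-(n:ℝ)) * Real.exp (1 / (12 * (n:ℝ) + 1))
        = (√π * Real.exp (1 / (12 * (n:ℝ) + 1))) * (√2 * √(n:ℝ) * ((n:ℝ)^n * Real.exp (-(n:ℝ)))) := by
          ring
      _ < stirlingSeq n * (√2 * √(n:ℝ) * ((n:ℝ)^n * Real.exp (-(n:ℝ)))) :=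
          mul_lt_mul_of_pos_right hK1 hC
  · rw [hfact, hpow, hsqrt]
    calc stirlingSeq n * (√2 * √(n:ℝ) * ((n:ℝ)^n * Real.exp (-(n:ℝ))))
        < (√π * Real.exp (1 / (12 * (n:ℝ)))) * (√2 * √(n:ℝ) * ((n:ℝ)^n * Real.exp (-(n:ℝ)))) :=
          mul_lt_mul_of_pos_right hK2 hC
      _ = √2 * √π * ((n:ℝ)^(n:ℕ) * √(n:ℝ)) * Real.exp (-(n:ℝ)) * Real.exp (1 / (12 * (n:ℝ))) := by
          ring
end
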